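/- Let T be an abelian category, and let ℒ : 0 → B →ι_L→ L →π_L→ A → 0 and 𝒩 : 0 → A →ι_N→ N →π_N→ C → 0 be short exact sequences. Suppose Ext¹(C, B) = 0 (the group Ext¹(C, B) is trivial). Let f_B, f_A, f_C be automorphisms of B, A, C, and let ℒ′ : 0 → B →(ι_L∘f_B)→ L →(f_A⁻¹∘π_L)→ A → 0 and 𝒩′ : 0 → A →(ι_N∘f_A)→ N →(f_C∘π_N)→ C → 0 be the twisted sequences. If M is attached to (ℒ, 𝒩) and M′ is attached to (ℒ′, 𝒩′), then M and M′ are isomorphic. -/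

import Mathlib

/-!
STATEMENT 12: (Injectivity part of Proposition 6.6(d) of the paper.)
Let `ℒ : 0 → B → L → A → 0` and `𝒩 : 0 → A → N → C → 0` be short exact
sequences in an abelian category `T` with `Ext¹(C, B) = 0`. Let
`f_B, f_A, f_C` be automorphisms of `B, A, C` and let `(ℒ′, 𝒩′)` be
the twist of `(ℒ, 𝒩)` by them. If `M` is attached to `(ℒ, 𝒩)` and `M′`
is attached to `(ℒ′, 𝒩′)`, then `M` and `M′` are isomorphic.
-/

open CategoryTheory CategoryTheory.Abelian

universe w v u

variable {T : Type u} [Category.{v} T] [Abelian T]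

/-- `M` is attached to the pair of extensions `(ℒ, 𝒩)` given by
`ιL, πL, ιN, πN` (an *extension panachée*). -/
def IsAttached {B L A N C : T}
    (ιL : B ⟶ L) (πL : L ⟶ A) (ιN : A ⟶ N) (πN : N ⟶ C) (M : T) : Prop :=
  ∃ (α : L ⟶ M) (p : M ⟶ N) (w₁ : (ιL ≫ α) ≫ p = 0) (w₂ : α ≫ p ≫ πN = 0),
    (ShortComplex.mk (ιL ≫ α) p w₁).ShortExact ∧
    (ShortComplex.mk α (p ≫ πN) w₂).ShortExact ∧
    α ≫ p = πL ≫ ιN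

namespace ExtensionPanachee

open CategoryTheory.Limits

universe w'

set_option linter.unusedSectionVars false

/-- The single functor in degree 0 composed with homology in degree 0 is the identity. -/
noncomputable def εiso [HasDerivedCategory.{w'} T] :
    DerivedCategory.singleFunctor T 0 ⋙ DerivedCategory.homologyFunctor T 0 ≅ 𝟭 T := by
  refine Functor.isoWhiskerRight ?_ (DerivedCategory.homologyFunctor T 0) ≪≫
    Functor.associator _ _ _ ≪≫
    Functor.isoWhiskerLeft (CochainComplex.singleFunctor T 0)
      (DerivedCategory.homologyFunctorFactors T 0) ≪≫
    HomologicalComplex.homologyFunctorSingleIso T (ComplexShape.up ℤ) 0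
  exact ⟨(DerivedCategory.singleFunctorsPostcompQIso T).hom.hom 0,
    (DerivedCategory.singleFunctorsPostcompQIso T).inv.hom 0,
    by rw [DerivedCategory.singleFunctorsPostcompQIso_hom_hom,
        DerivedCategory.singleFunctorsPostcompQIso_inv_hom]; exact Category.id_comp _,
    by rw [DerivedCategory.singleFunctorsPostcompQIso_hom_hom,
        DerivedCategory.singleFunctorsPostcompQIso_inv_hom]; exact Category.id_comp _⟩

variable [HasExt.{w} T]

/-- Convert a degree-zero `Ext` into an actual morphism. -/
noncomputable def extToHom {X Y : T} (x : Ext X Y 0) : X ⟶ Y :=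
  letI := HasDerivedCategory.standard T
  (εiso (T := T)).inv.app X ≫
    (DerivedCategory.homologyFunctor T 0).map
      (x.hom ≫ (shiftFunctorZero' (DerivedCategory T) ((0 : ℕ) : ℤ) (by simp)).hom.app _) ≫
    (εiso (T := T)).hom.app Y

lemma extToHom_mk₀ {X Y : T} (f : X ⟶ Y) : extToHom (Ext.mk₀ f) = f := by
  letI := HasDerivedCategory.standard T
  dsimp only [extToHom]
  have h1 : (Ext.mk₀ f).hom ≫
      (shiftFunctorZero' (DerivedCategory T) ((0 : ℕ) : ℤ) (by simp)).hom.app _ =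
      (DerivedCategory.singleFunctor T 0).map f := by
    rw [Ext.mk₀_hom]
    dsimp [ShiftedHom.mk₀]
    rw [Category.assoc, Iso.inv_hom_id_app]
    simp
  rw [h1]
  have := (εiso (T := T)).hom.naturality f
  dsimp at this
  rw [this]
  simp

lemma extToHom_mk₀_comp {X Y Z : T} (f : X ⟶ Y) (x : Ext Y Z 0) :
    extToHom ((Ext.mk₀ f).comp x (zero_add 0)) = f ≫ extToHom x := by
  letI := HasDerivedCategory.standard T
  dsimp only [extToHom]
  have h1 : ((Ext.mk₀ f).comp x (zero_add 0)).hom =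
      (DerivedCategory.singleFunctor T 0).map f ≫ x.hom := by
    rw [Ext.comp_hom, Ext.mk₀_hom, ShiftedHom.mk₀_comp]
  have h2 := (εiso (T := T)).inv.naturality f
  rw [h1]
  simp only [Functor.map_comp, Category.assoc]
  rw [← reassoc_of% h2]

lemma extToHom_comp_mk₀ {X Y Z : T} (x : Ext X Y 0) (g : Y ⟶ Z) :
    extToHom (x.comp (Ext.mk₀ g) (zero_add 0)) = extToHom x ≫ g := by
  letI := HasDerivedCategory.standard T
  dsimp only [extToHom]
  have h1 : (x.comp (Ext.mk₀ g) (zero_add 0)).hom =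
      x.hom ≫ ((DerivedCategory.singleFunctor T 0).map g)⟦((0 : ℕ) : ℤ)⟧' := by
    rw [Ext.comp_hom, Ext.mk₀_hom, ShiftedHom.comp_mk₀]
  have h2 := (shiftFunctorZero' (DerivedCategory T) ((0 : ℕ) : ℤ) (by simp)).hom.naturality
    ((DerivedCategory.singleFunctor T 0).map g)
  have h3 := (εiso (T := T)).hom.naturality g
  rw [h1, Category.assoc, h2]
  simp only [Functor.id_map, Functor.map_comp, Category.assoc]
  rw [← Functor.comp_map (DerivedCategory.singleFunctor T 0)
    (DerivedCategory.homologyFunctor T 0) g, h3]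
  simp

/-- An attached object stays attached after twisting the pair of extensions by
automorphisms of `B`, `A`, `C`. -/
lemma isAttached_twist {B L A N C : T} {ι : B ⟶ L} {π : L ⟶ A} {ιN : A ⟶ N} {πN : N ⟶ C}
    {M : T} (b : B ≅ B) (a : A ≅ A) (c : C ≅ C) (h : IsAttached ι π ιN πN M) :
    IsAttached (b.hom ≫ ι) (π ≫ a.inv) (a.hom ≫ ιN) (πN ≫ c.hom) M := by
  obtain ⟨α, p, w₁, w₂, h1, h2, h3⟩ := h
  have w₁' : ((b.hom ≫ ι) ≫ α) ≫ p = 0 := by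
    simp only [Category.assoc]
    simp only [Category.assoc] at w₁
    rw [w₁, Limits.comp_zero]
  have w₂' : α ≫ p ≫ πN ≫ c.hom = 0 := by
    have : α ≫ p ≫ πN ≫ c.hom = (α ≫ p ≫ πN) ≫ c.hom := by simp
    rw [this, w₂, Limits.zero_comp]
  refine ⟨α, p, w₁', w₂', ?_, ?_, ?_⟩
  · exact ShortComplex.shortExact_of_iso
      (ShortComplex.isoMk (S₁ := ShortComplex.mk (ι ≫ α) p w₁)
        (S₂ := ShortComplex.mk ((b.hom ≫ ι) ≫ α) p w₁')
        b.symm (Iso.refl M) (Iso.refl N) (by simp) (by simp)) h1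
  · exact ShortComplex.shortExact_of_iso
      (ShortComplex.isoMk (S₁ := ShortComplex.mk α (p ≫ πN) w₂)
        (S₂ := ShortComplex.mk α (p ≫ πN ≫ c.hom) w₂')
        (Iso.refl L) (Iso.refl M) c (by simp) (by simp)) h2
  · rw [h3]; simp

/-- Uniqueness of the extension panachée: two objects attached to the same pair of
extensions are isomorphic when `Ext¹(C, B) = 0`. -/
lemma key {B L A N C : T} (ι : B ⟶ L) (π : L ⟶ A) (ιN : A ⟶ N) (πN : N ⟶ C)
    (hext : ∀ e : Ext C B 1, e = 0) {M M' : T}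
    (hM : IsAttached ι π ιN πN M) (hM' : IsAttached ι π ιN πN M') :
    Nonempty (M ≅ M') := by
  obtain ⟨α, p, w₁, w₂, h1, h2, h3⟩ := hM
  obtain ⟨α', p', w₁', w₂', h1', h2', h3'⟩ := hM'
  have hcomm : α ≫ p = α' ≫ p' := h3.trans h3'.symm
  -- the obstruction to lifting `p : M ⟶ N` through `p' : M' ⟶ N` vanishes
  have hobs : (Ext.mk₀ p).comp h1'.extClass (zero_add 1) = 0 := by
    have hk : (Ext.mk₀ α).comp ((Ext.mk₀ p).comp h1'.extClass (zero_add 1)) (zero_add 1) = 0 := by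
      rw [Ext.mk₀_comp_mk₀_assoc, hcomm, ← Ext.mk₀_comp_mk₀_assoc,
        h1'.comp_extClass, Ext.comp_zero]
    obtain ⟨x₁, hx₁⟩ := Ext.contravariant_sequence_exact₂ h2 B _ hk
    rw [← hx₁, hext x₁, Ext.comp_zero]
  obtain ⟨x, hx⟩ := Ext.covariant_sequence_exact₃ M h1' (Ext.mk₀ p) rfl hobs
  set φ : M ⟶ M' := extToHom x with hφdef
  have hφ : φ ≫ p' = p := by
    rw [hφdef, ← extToHom_comp_mk₀ x p', hx, extToHom_mk₀]
  -- correct `φ` so that it also commutes with the maps from `L`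
  have hd : (α ≫ φ - α') ≫ p' = 0 := by
    rw [Preadditive.sub_comp, Category.assoc, hφ, h3, h3', sub_self]
  have hmono : Mono (ShortComplex.mk (ι ≫ α') p' w₁').f := h1'.mono_f
  set u : L ⟶ B := h1'.exact.lift (α ≫ φ - α') hd with hudef
  have hu : u ≫ (ι ≫ α') = α ≫ φ - α' := h1'.exact.lift_f _ _
  obtain ⟨x₂, hx₂⟩ := Ext.contravariant_sequence_exact₁ h2 B (Ext.mk₀ u) rfl (hext _)
  set v : M ⟶ B := extToHom x₂ with hvdef
  have hv : α ≫ v = u := by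
    rw [hvdef, ← extToHom_mk₀_comp α x₂, hx₂, extToHom_mk₀]
  set ψ : M ⟶ M' := φ - v ≫ (ι ≫ α') with hψdef
  have hψp : ψ ≫ p' = p := by
    rw [hψdef, Preadditive.sub_comp, hφ, Category.assoc, w₁', Limits.comp_zero, sub_zero]
  have hψα : α ≫ ψ = α' := by
    rw [hψdef, Preadditive.comp_sub, ← Category.assoc, hv, hu, sub_sub_cancel]
  -- `ψ` is an isomorphism by the five lemma
  let Φ : ShortComplex.mk α (p ≫ πN) w₂ ⟶ ShortComplex.mk α' (p' ≫ πN) w₂' :=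
    { τ₁ := 𝟙 L, τ₂ := ψ, τ₃ := 𝟙 C,
      comm₁₂ := by dsimp; rw [Category.id_comp, hψα],
      comm₂₃ := by dsimp; rw [Category.comp_id, ← Category.assoc, hψp] }
  have hiso : IsIso Φ.τ₂ := ShortComplex.isIso₂_of_shortExact_of_isIso₁₃' Φ h2 h2'
    (by dsimp [Φ]; infer_instance) (by dsimp [Φ]; infer_instance)
  exact ⟨@asIso _ _ _ _ ψ hiso⟩

end ExtensionPanachee

theorem attached_iso_of_twisted_pair
    [HasExt.{w} T] {B L A N C : T}
    (ιL : B ⟶ L) (πL : L ⟶ A) (wL : ιL ≫ πL = 0)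
    (hL : (ShortComplex.mk ιL πL wL).ShortExact)
    (ιN : A ⟶ N) (πN : N ⟶ C) (wN : ιN ≫ πN = 0)
    (hN : (ShortComplex.mk ιN πN wN).ShortExact)
    (hext : ∀ e : Ext C B 1, e = 0)
    (fB : B ≅ B) (fA : A ≅ A) (fC : C ≅ C)
    {M M' : T}
    (hM : IsAttached ιL πL ιN πN M)
    (hM' : IsAttached (fB.hom ≫ ιL) (πL ≫ fA.inv) (fA.hom ≫ ιN) (πN ≫ fC.hom) M') :
    Nonempty (M ≅ M') :=
  ExtensionPanachee.key (fB.hom ≫ ιL) (πL ≫ fA.inv) (fA.hom ≫ ιN) (πN ≫ fC.hom) hext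
    (ExtensionPanachee.isAttached_twist fB fA fC hM) hM'
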